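/- (Proposition 4.) Let C be a p×p symmetric positive definite real matrix (indexed by pairs). Then the identity matrix I_p minimizes d(K : C) over all separable positive definite p×p matrices K if and only if P1(C, I_{p2}) = p2·I_{p1} and P2(C, I_{p1}) = p1·I_{p2}. -/

import Mathlib

open Matrix BigOperators Filter

/-- The separable (Kronecker) product `M2 ⊛ M1`: entry at `((i,j),(i',j'))` is
`M1 i i' * M2 j j'`. -/
noncomputable def sep {p1 p2 : ℕ} (M1 : Matrix (Fin p1) (Fin p1) ℝ)
    (M2 : Matrix (Fin p2) (Fin p2) ℝ) :
    Matrix (Fin p1 × Fin p2) (Fin p1 × Fin p2) ℝ :=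
  fun x y => M1 x.1 y.1 * M2 x.2 y.2

/-- A `p × p` matrix is separable positive definite if it is the separable product of
two symmetric positive definite matrices. -/
def SepPD {p1 p2 : ℕ} (K : Matrix (Fin p1 × Fin p2) (Fin p1 × Fin p2) ℝ) : Prop :=
  ∃ (S1 : Matrix (Fin p1) (Fin p1) ℝ) (S2 : Matrix (Fin p2) (Fin p2) ℝ),
    S1.PosDef ∧ S2.PosDef ∧ K = sep S1 S2

/-- The divergence `d(K : S) = log det K + trace (K⁻¹ S)`. -/
noncomputable def dvg {ι : Type*} [Fintype ι] [DecidableEq ι] (K S : Matrix ι ι ℝ) : ℝ :=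
  Real.log K.det + (K⁻¹ * S).trace

/-- `P1 S B` has entries `∑_{j,j'} B j j' * S (i,j) (i',j')`. -/
noncomputable def P1 {p1 p2 : ℕ} (S : Matrix (Fin p1 × Fin p2) (Fin p1 × Fin p2) ℝ)
    (B : Matrix (Fin p2) (Fin p2) ℝ) : Matrix (Fin p1) (Fin p1) ℝ :=
  fun i i' => ∑ j, ∑ j', B j j' * S (i, j) (i', j')

/-- `P2 S A` has entries `∑_{i,i'} A i i' * S (i,j) (i',j')`. -/
noncomputable def P2 {p1 p2 : ℕ} (S : Matrix (Fin p1 × Fin p2) (Fin p1 × Fin p2) ℝ)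
    (A : Matrix (Fin p1) (Fin p1) ℝ) : Matrix (Fin p2) (Fin p2) ℝ :=
  fun j j' => ∑ i, ∑ i', A i i' * S (i, j) (i', j')

section Stmt9Aux

open Kronecker

private lemma trace_mul_sum' {ι : Type*} [Fintype ι] (A B : Matrix ι ι ℝ) :
    (A * B).trace = ∑ x, ∑ y, A x y * B y x := by
  simp [Matrix.trace, Matrix.diag, Matrix.mul_apply]

private lemma unitary_col' {n : ℕ} {U : Matrix (Fin n) (Fin n) ℝ}
    (h : U ∈ Matrix.unitaryGroup (Fin n) ℝ) (a a' : Fin n) :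
    ∑ i, U i a * U i a' = if a = a' then (1:ℝ) else 0 := by
  have h2 := Matrix.mem_unitaryGroup_iff'.mp h
  have := congrFun (congrFun h2 a) a'
  simpa [Matrix.mul_apply, Matrix.star_apply, Matrix.one_apply, mul_comm] using this

private lemma unitary_row' {n : ℕ} {U : Matrix (Fin n) (Fin n) ℝ}
    (h : U ∈ Matrix.unitaryGroup (Fin n) ℝ) (i i' : Fin n) :
    ∑ a, U i a * U i' a = if i = i' then (1:ℝ) else 0 := by
  have h2 := Matrix.mem_unitaryGroup_iff.mp h
  have := congrFun (congrFun h2 i) i'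
  simpa [Matrix.mul_apply, Matrix.star_apply, Matrix.one_apply] using this

private lemma herm_entry' {n : ℕ} {A : Matrix (Fin n) (Fin n) ℝ} (hA : A.IsHermitian)
    (i i' : Fin n) :
    A i i' = ∑ a, hA.eigenvalues a *
      ((hA.eigenvectorUnitary : Matrix (Fin n) (Fin n) ℝ) i a
        * (hA.eigenvectorUnitary : Matrix (Fin n) (Fin n) ℝ) i' a) := by
  conv_lhs => rw [hA.spectral_theorem]
  simp [Matrix.mul_apply, Matrix.diagonal, Matrix.star_apply, Finset.sum_mul]
  congr 1; ext a; ring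

private lemma posDef_smul' {n : ℕ} {M : Matrix (Fin n) (Fin n) ℝ} (hM : M.PosDef) {c : ℝ}
    (hc : 0 < c) : (c • M).PosDef := by
  rw [Matrix.posDef_iff_dotProduct_mulVec]
  refine ⟨?_, fun x hx => ?_⟩
  · unfold Matrix.IsHermitian
    rw [Matrix.conjTranspose_smul, hM.1.eq]
    simp
  · have := hM.dotProduct_mulVec_pos hx
    have h2 : dotProduct (star x) ((c • M) *ᵥ x) = c * dotProduct (star x) (M *ᵥ x) := by
      simp [Matrix.smul_mulVec, dotProduct_smul, smul_eq_mul]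
    rw [h2]
    positivity

private lemma posSemidef_diag' {ι : Type*} [Fintype ι] [DecidableEq ι] {A : Matrix ι ι ℝ}
    (hA : A.PosSemidef) (x : ι) : 0 ≤ A x x := by
  have := hA.dotProduct_mulVec_nonneg (Pi.single x 1)
  simpa [dotProduct, Matrix.mulVec, Pi.single_apply, Finset.sum_ite_eq,
    Finset.sum_ite_eq'] using this

private lemma symm_entry' {ι : Type*} {A : Matrix ι ι ℝ} (hA : A.IsHermitian) (x y : ι) :
    A x y = A y x := by
  conv_lhs => rw [← hA.eq]
  simp [Matrix.conjTranspose_apply]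

private lemma sep_eq' {p1 p2 : ℕ} (M1 : Matrix (Fin p1) (Fin p1) ℝ)
    (M2 : Matrix (Fin p2) (Fin p2) ℝ) : sep M1 M2 = M1 ⊗ₖ M2 := rfl

private lemma dvg_one' {ι : Type*} [Fintype ι] [DecidableEq ι] (C : Matrix ι ι ℝ) :
    dvg (1 : Matrix ι ι ℝ) C = C.trace := by
  simp [dvg, inv_one]

private lemma dvg_sep' {p1 p2 : ℕ} {S1 : Matrix (Fin p1) (Fin p1) ℝ}
    {S2 : Matrix (Fin p2) (Fin p2) ℝ}
    (hS1 : S1.PosDef) (hS2 : S2.PosDef) (C : Matrix (Fin p1 × Fin p2) (Fin p1 × Fin p2) ℝ) :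
    dvg (sep S1 S2) C = p2 * Real.log S1.det + p1 * Real.log S2.det +
      ((S1⁻¹ ⊗ₖ S2⁻¹) * C).trace := by
  rw [dvg, sep_eq', Matrix.det_kronecker, Matrix.inv_kronecker,
    Real.log_mul (pow_ne_zero _ hS1.det_pos.ne') (pow_ne_zero _ hS2.det_pos.ne'),
    Real.log_pow, Real.log_pow]
  simp

private lemma P1_one_apply' {p1 p2 : ℕ} (C : Matrix (Fin p1 × Fin p2) (Fin p1 × Fin p2) ℝ)
    (i i' : Fin p1) : P1 C 1 i i' = ∑ j, C (i, j) (i', j) := by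
  simp [P1, Matrix.one_apply, Finset.sum_ite_eq]

private lemma P2_one_apply' {p1 p2 : ℕ} (C : Matrix (Fin p1 × Fin p2) (Fin p1 × Fin p2) ℝ)
    (j j' : Fin p2) : P2 C 1 j j' = ∑ i, C (i, j) (i, j') := by
  simp [P2, Matrix.one_apply, Finset.sum_ite_eq]

private lemma trace_eq_trace_P1' {p1 p2 : ℕ} (C : Matrix (Fin p1 × Fin p2) (Fin p1 × Fin p2) ℝ) :
    C.trace = (P1 C 1).trace := by
  simp [Matrix.trace, Matrix.diag, P1_one_apply', Fintype.sum_prod_type]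

private lemma trace_eq_trace_P2' {p1 p2 : ℕ} (C : Matrix (Fin p1 × Fin p2) (Fin p1 × Fin p2) ℝ) :
    C.trace = (P2 C 1).trace := by
  rw [Matrix.trace, Matrix.trace]
  simp only [Matrix.diag, P2_one_apply']
  rw [Fintype.sum_prod_type, Finset.sum_comm]

private lemma trace_kron_one_left' {p1 p2 : ℕ} (T : Matrix (Fin p1) (Fin p1) ℝ)
    (C : Matrix (Fin p1 × Fin p2) (Fin p1 × Fin p2) ℝ) :
    ((T ⊗ₖ (1 : Matrix (Fin p2) (Fin p2) ℝ)) * C).trace = (T * P1 C 1).trace := by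
  rw [trace_mul_sum', trace_mul_sum']
  simp only [Fintype.sum_prod_type, Matrix.kroneckerMap_apply, Matrix.one_apply, P1_one_apply',
    mul_ite, mul_one, mul_zero, ite_mul, zero_mul, Finset.sum_ite_eq, Finset.sum_ite_eq',
    Finset.mem_univ, if_true, Finset.mul_sum, Finset.sum_ite_irrel, Finset.sum_const_zero,
    one_mul]
  exact Finset.sum_congr rfl fun i _ => Finset.sum_comm

private lemma trace_kron_one_right' {p1 p2 : ℕ} (T : Matrix (Fin p2) (Fin p2) ℝ)
    (C : Matrix (Fin p1 × Fin p2) (Fin p1 × Fin p2) ℝ) :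
    (((1 : Matrix (Fin p1) (Fin p1) ℝ) ⊗ₖ T) * C).trace = (T * P2 C 1).trace := by
  rw [trace_mul_sum', trace_mul_sum']
  simp only [Fintype.sum_prod_type, Matrix.kroneckerMap_apply, Matrix.one_apply, P2_one_apply',
    mul_ite, mul_one, mul_zero, ite_mul, zero_mul, Finset.sum_ite_eq, Finset.sum_ite_eq',
    Finset.mem_univ, if_true, Finset.mul_sum, Finset.sum_ite_irrel, Finset.sum_const_zero,
    one_mul]
  rw [Finset.sum_comm]
  exact Finset.sum_congr rfl fun j _ => Finset.sum_comm

private lemma trace_eq_sum_eig' {n : ℕ} {M : Matrix (Fin n) (Fin n) ℝ} (hM : M.IsHermitian) :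
    M.trace = ∑ a, hM.eigenvalues a := by
  rw [Matrix.trace]
  simp only [Matrix.diag]
  calc ∑ i, M i i = ∑ i, ∑ a, hM.eigenvalues a *
      ((hM.eigenvectorUnitary : Matrix (Fin n) (Fin n) ℝ) i a
        * (hM.eigenvectorUnitary : Matrix (Fin n) (Fin n) ℝ) i a) :=
        Finset.sum_congr rfl fun i _ => herm_entry' hM i i
    _ = ∑ a, hM.eigenvalues a * ∑ i, ((hM.eigenvectorUnitary : Matrix (Fin n) (Fin n) ℝ) i a
        * (hM.eigenvectorUnitary : Matrix (Fin n) (Fin n) ℝ) i a) := by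
        rw [Finset.sum_comm]; exact Finset.sum_congr rfl fun a _ => (Finset.mul_sum _ _ _).symm
    _ = ∑ a, hM.eigenvalues a := by
        refine Finset.sum_congr rfl fun a _ => ?_
        rw [unitary_col' (SetLike.coe_mem _) a a]
        simp

private lemma det_eq_prod_eig' {n : ℕ} {M : Matrix (Fin n) (Fin n) ℝ} (hM : M.IsHermitian) :
    M.det = ∏ a, hM.eigenvalues a := by
  simpa using hM.det_eq_prod_eigenvalues

private lemma min_lemma' {n : ℕ} {c : ℝ} (hc : 0 < c) {M : Matrix (Fin n) (Fin n) ℝ}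
    (hM : M.PosDef)
    (h : M.trace ≤ c * Real.log (c⁻¹ ^ n * M.det) + c * n) : M = c • 1 := by
  set μ := hM.1.eigenvalues with hμ
  have hμpos : ∀ a, 0 < μ a := hM.eigenvalues_pos
  have htr : M.trace = ∑ a, μ a := trace_eq_sum_eig' hM.1
  have hdet : M.det = ∏ a, μ a := det_eq_prod_eig' hM.1
  have hlog : Real.log (c⁻¹ ^ n * M.det) = n * (-Real.log c) + ∑ a, Real.log (μ a) := by
    rw [hdet, Real.log_mul (pow_ne_zero _ (inv_ne_zero hc.ne')) (Finset.prod_pos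
      (fun a _ => hμpos a)).ne', Real.log_pow, Real.log_inv, Real.log_prod
      (fun a _ => (hμpos a).ne')]
  have hpt : ∀ a, 0 ≤ μ a - c * Real.log (μ a) + c * Real.log c - c := by
    intro a
    have h1 : Real.log (μ a / c) ≤ μ a / c - 1 :=
      Real.log_le_sub_one_of_pos (div_pos (hμpos a) hc)
    rw [Real.log_div (hμpos a).ne' hc.ne'] at h1
    have h2 := mul_le_mul_of_nonneg_left h1 hc.le
    have h3 : c * (μ a / c - 1) = μ a - c := by field_simp
    nlinarith
  have hptstrict : ∀ a, μ a ≠ c → 0 < μ a - c * Real.log (μ a) + c * Real.log c - c := by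
    intro a hne
    have h1 : Real.log (μ a / c) < μ a / c - 1 :=
      Real.log_lt_sub_one_of_pos (div_pos (hμpos a) hc)
        (by rw [Ne, div_eq_one_iff_eq hc.ne']; exact hne)
    rw [Real.log_div (hμpos a).ne' hc.ne'] at h1
    have h2 := mul_lt_mul_of_pos_left h1 hc
    have h3 : c * (μ a / c - 1) = μ a - c := by field_simp
    nlinarith
  have hsum : ∑ a, (μ a - c * Real.log (μ a) + c * Real.log c - c) ≤ 0 := by
    have hexp : ∑ a, (μ a - c * Real.log (μ a) + c * Real.log c - c)
        = (∑ a, μ a) - c * (∑ a, Real.log (μ a)) + n * (c * Real.log c) - n * c := by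
      rw [Finset.sum_sub_distrib, Finset.sum_add_distrib, Finset.sum_sub_distrib,
        ← Finset.mul_sum]
      simp [Finset.card_univ]
    rw [hexp]
    rw [htr, hlog] at h
    nlinarith
  have hall : ∀ a, μ a = c := by
    intro a
    by_contra hne
    have hpos : 0 < ∑ a, (μ a - c * Real.log (μ a) + c * Real.log c - c) :=
      Finset.sum_pos' (fun b _ => hpt b) ⟨a, Finset.mem_univ a, hptstrict a hne⟩
    linarith
  ext i i'
  rw [herm_entry' hM.1 i i', ← hμ]
  simp only [hall]
  rw [← Finset.mul_sum, unitary_row' (SetLike.coe_mem _) i i']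
  simp [Matrix.one_apply]
private lemma sum_rot' {A B D : Type*} [Fintype A] [Fintype B] [Fintype D]
    (f : A → B → D → ℝ) :
    ∑ i, ∑ j, ∑ l, f i j l = ∑ l, ∑ i, ∑ j, f i j l :=
  (Finset.sum_congr rfl fun _ _ => Finset.sum_comm).trans Finset.sum_comm

private lemma conj_entry' {p1 p2 : ℕ} (C : Matrix (Fin p1 × Fin p2) (Fin p1 × Fin p2) ℝ)
    (U : Matrix (Fin p1) (Fin p1) ℝ) (V : Matrix (Fin p2) (Fin p2) ℝ)
    (a a' : Fin p1) (b b' : Fin p2) :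
    ((star U ⊗ₖ star V) * C * (U ⊗ₖ V)) (a, b) (a', b') =
      ∑ i', ∑ j', ∑ i, ∑ j, (U i a * V j b) * C (i, j) (i', j') * (U i' a' * V j' b') := by
  simp only [Matrix.mul_apply, Matrix.kroneckerMap_apply, Matrix.star_apply,
    Fintype.sum_prod_type, Finset.sum_mul, Finset.mul_sum, star_trivial]

private lemma marg1' {p1 p2 : ℕ} {C : Matrix (Fin p1 × Fin p2) (Fin p1 × Fin p2) ℝ}
    (hP1 : P1 C 1 = (p2 : ℝ) • (1 : Matrix (Fin p1) (Fin p1) ℝ))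
    {U : Matrix (Fin p1) (Fin p1) ℝ} {V : Matrix (Fin p2) (Fin p2) ℝ}
    (hU : U ∈ Matrix.unitaryGroup (Fin p1) ℝ) (hV : V ∈ Matrix.unitaryGroup (Fin p2) ℝ)
    (a : Fin p1) :
    ∑ b, ((star U ⊗ₖ star V) * C * (U ⊗ₖ V)) (a, b) (a, b) = (p2 : ℝ) := by
  calc ∑ b, ((star U ⊗ₖ star V) * C * (U ⊗ₖ V)) (a, b) (a, b)
      = ∑ b, ∑ i', ∑ j', ∑ i, ∑ j,
          (U i a * V j b) * C (i, j) (i', j') * (U i' a * V j' b) :=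
        Finset.sum_congr rfl fun b _ => conj_entry' C U V a a b b
    _ = ∑ i', ∑ j', ∑ i, ∑ j, ∑ b,
          (U i a * V j b) * C (i, j) (i', j') * (U i' a * V j' b) := by
        rw [Finset.sum_comm]
        refine Finset.sum_congr rfl fun i' _ => ?_
        rw [Finset.sum_comm]
        refine Finset.sum_congr rfl fun j' _ => ?_
        rw [Finset.sum_comm]
        refine Finset.sum_congr rfl fun i _ => ?_
        rw [Finset.sum_comm]
    _ = ∑ i', ∑ j', ∑ i, ∑ j,
          (U i a * U i' a * C (i, j) (i', j')) * ∑ b, V j b * V j' b := by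
        refine Finset.sum_congr rfl fun i' _ => Finset.sum_congr rfl fun j' _ =>
          Finset.sum_congr rfl fun i _ => Finset.sum_congr rfl fun j _ => ?_
        rw [Finset.mul_sum]
        exact Finset.sum_congr rfl fun b _ => by ring
    _ = ∑ i', ∑ j', ∑ i, U i a * U i' a * C (i, j') (i', j') := by
        refine Finset.sum_congr rfl fun i' _ => Finset.sum_congr rfl fun j' _ =>
          Finset.sum_congr rfl fun i _ => ?_
        simp [unitary_row' hV, mul_ite, Finset.sum_ite_eq']
    _ = ∑ i', ∑ i, U i a * U i' a * P1 C 1 i i' := by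
        refine Finset.sum_congr rfl fun i' _ => ?_
        rw [Finset.sum_comm]
        refine Finset.sum_congr rfl fun i _ => ?_
        rw [P1_one_apply', Finset.mul_sum]
    _ = ∑ i', U i' a * U i' a * (p2 : ℝ) := by
        rw [hP1]
        refine Finset.sum_congr rfl fun i' _ => ?_
        simp [Matrix.one_apply, mul_ite, Finset.sum_ite_eq']
    _ = (p2 : ℝ) := by
        rw [← Finset.sum_mul, unitary_col' hU a a]
        simp

private lemma marg2' {p1 p2 : ℕ} {C : Matrix (Fin p1 × Fin p2) (Fin p1 × Fin p2) ℝ}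
    (hP2 : P2 C 1 = (p1 : ℝ) • (1 : Matrix (Fin p2) (Fin p2) ℝ))
    {U : Matrix (Fin p1) (Fin p1) ℝ} {V : Matrix (Fin p2) (Fin p2) ℝ}
    (hU : U ∈ Matrix.unitaryGroup (Fin p1) ℝ) (hV : V ∈ Matrix.unitaryGroup (Fin p2) ℝ)
    (b : Fin p2) :
    ∑ a, ((star U ⊗ₖ star V) * C * (U ⊗ₖ V)) (a, b) (a, b) = (p1 : ℝ) := by
  calc ∑ a, ((star U ⊗ₖ star V) * C * (U ⊗ₖ V)) (a, b) (a, b)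
      = ∑ a, ∑ i', ∑ j', ∑ i, ∑ j,
          (U i a * V j b) * C (i, j) (i', j') * (U i' a * V j' b) :=
        Finset.sum_congr rfl fun a _ => conj_entry' C U V a a b b
    _ = ∑ i', ∑ j', ∑ i, ∑ j, ∑ a,
          (U i a * V j b) * C (i, j) (i', j') * (U i' a * V j' b) := by
        rw [Finset.sum_comm]
        refine Finset.sum_congr rfl fun i' _ => ?_
        rw [Finset.sum_comm]
        refine Finset.sum_congr rfl fun j' _ => ?_
        rw [Finset.sum_comm]
        refine Finset.sum_congr rfl fun i _ => ?_
        rw [Finset.sum_comm]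
    _ = ∑ i', ∑ j', ∑ i, ∑ j,
          (V j b * V j' b * C (i, j) (i', j')) * ∑ a, U i a * U i' a := by
        refine Finset.sum_congr rfl fun i' _ => Finset.sum_congr rfl fun j' _ =>
          Finset.sum_congr rfl fun i _ => Finset.sum_congr rfl fun j _ => ?_
        rw [Finset.mul_sum]
        exact Finset.sum_congr rfl fun a _ => by ring
    _ = ∑ i', ∑ j', ∑ j, V j b * V j' b * C (i', j) (i', j') := by
        refine Finset.sum_congr rfl fun i' _ => Finset.sum_congr rfl fun j' _ => ?_
        simp [unitary_row' hU, mul_ite, mul_zero, mul_one, Finset.sum_ite_irrel,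
          Finset.sum_const_zero, Finset.sum_ite_eq']
    _ = ∑ j', ∑ j, V j b * V j' b * P2 C 1 j j' := by
        rw [Finset.sum_comm]
        refine Finset.sum_congr rfl fun j' _ => ?_
        rw [Finset.sum_comm]
        refine Finset.sum_congr rfl fun j _ => ?_
        rw [P2_one_apply', Finset.mul_sum]
    _ = ∑ j', V j' b * V j' b * (p1 : ℝ) := by
        rw [hP2]
        refine Finset.sum_congr rfl fun j' _ => ?_
        simp [Matrix.one_apply, mul_ite, Finset.sum_ite_eq']
    _ = (p1 : ℝ) := by
        rw [← Finset.sum_mul, unitary_col' hV b b]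
        simp

private lemma P1_posDef' {p1 p2 : ℕ} (hp2 : 0 < p2)
    {C : Matrix (Fin p1 × Fin p2) (Fin p1 × Fin p2) ℝ} (hC : C.PosDef) :
    (P1 C 1).PosDef := by
  rw [Matrix.posDef_iff_dotProduct_mulVec]
  constructor
  · ext i i'
    simp only [Matrix.conjTranspose_apply, star_trivial, P1_one_apply']
    exact Finset.sum_congr rfl fun j _ => symm_entry' hC.1 _ _
  · intro x hx
    set z : Fin p2 → (Fin p1 × Fin p2 → ℝ) := fun j y => if y.2 = j then x y.1 else 0 with hz
    have hq : ∀ j, dotProduct (star (z j)) (C *ᵥ (z j))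
        = ∑ i, ∑ i', x i * C (i, j) (i', j) * x i' := by
      intro j
      simp only [dotProduct, Matrix.mulVec, hz, star_trivial,
        Fintype.sum_prod_type, mul_ite, ite_mul, zero_mul, mul_zero, Finset.sum_ite_irrel,
        Finset.sum_const_zero, Finset.sum_ite_eq', Finset.mem_univ, if_true]
      refine Finset.sum_congr rfl fun i _ => ?_
      rw [Finset.mul_sum]
      exact Finset.sum_congr rfl fun i' _ => by ring
    have hmain : dotProduct (star x) ((P1 C 1) *ᵥ x)
        = ∑ j, dotProduct (star (z j)) (C *ᵥ (z j)) := by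
      have e1 : ∑ j, dotProduct (star (z j)) (C *ᵥ (z j))
          = ∑ j, ∑ i, ∑ i', x i * C (i, j) (i', j) * x i' :=
        Finset.sum_congr rfl fun j _ => hq j
      rw [e1]
      simp only [dotProduct, Matrix.mulVec, star_trivial, P1_one_apply']
      calc ∑ i, x i * ∑ i', (∑ j, C (i, j) (i', j)) * x i'
          = ∑ i, ∑ i', ∑ j, x i * C (i, j) (i', j) * x i' := by
            refine Finset.sum_congr rfl fun i _ => ?_
            rw [Finset.mul_sum]
            refine Finset.sum_congr rfl fun i' _ => ?_
            rw [Finset.sum_mul, Finset.mul_sum]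
            exact Finset.sum_congr rfl fun j _ => by ring
        _ = ∑ j, ∑ i, ∑ i', x i * C (i, j) (i', j) * x i' :=
            sum_rot' _
    rw [hmain]
    have hj0 : (⟨0, hp2⟩ : Fin p2) ∈ (Finset.univ : Finset (Fin p2)) := Finset.mem_univ _
    refine Finset.sum_pos' (fun j _ => hC.posSemidef.dotProduct_mulVec_nonneg (z j)) ⟨⟨0, hp2⟩, hj0, ?_⟩
    refine hC.dotProduct_mulVec_pos (x := z ⟨0, hp2⟩) ?_
    obtain ⟨i, hi⟩ := Function.ne_iff.mp hx
    intro hzero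
    apply hi
    have := congrFun hzero (i, ⟨0, hp2⟩)
    simpa [hz] using this

private lemma P2_posDef' {p1 p2 : ℕ} (hp1 : 0 < p1)
    {C : Matrix (Fin p1 × Fin p2) (Fin p1 × Fin p2) ℝ} (hC : C.PosDef) :
    (P2 C 1).PosDef := by
  rw [Matrix.posDef_iff_dotProduct_mulVec]
  constructor
  · ext j j'
    simp only [Matrix.conjTranspose_apply, star_trivial, P2_one_apply']
    exact Finset.sum_congr rfl fun i _ => symm_entry' hC.1 _ _
  · intro x hx
    set z : Fin p1 → (Fin p1 × Fin p2 → ℝ) := fun i y => if y.1 = i then x y.2 else 0 with hz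
    have hq : ∀ i, dotProduct (star (z i)) (C *ᵥ (z i))
        = ∑ j, ∑ j', x j * C (i, j) (i, j') * x j' := by
      intro i
      simp only [dotProduct, Matrix.mulVec, hz, star_trivial,
        Fintype.sum_prod_type, mul_ite, ite_mul, zero_mul, mul_zero, Finset.sum_ite_irrel,
        Finset.sum_const_zero, Finset.sum_ite_eq', Finset.mem_univ, if_true]
      refine Finset.sum_congr rfl fun j _ => ?_
      rw [Finset.mul_sum]
      exact Finset.sum_congr rfl fun j' _ => by ring
    have hmain : dotProduct (star x) ((P2 C 1) *ᵥ x)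
        = ∑ i, dotProduct (star (z i)) (C *ᵥ (z i)) := by
      have e1 : ∑ i, dotProduct (star (z i)) (C *ᵥ (z i))
          = ∑ i, ∑ j, ∑ j', x j * C (i, j) (i, j') * x j' :=
        Finset.sum_congr rfl fun i _ => hq i
      rw [e1]
      simp only [dotProduct, Matrix.mulVec, star_trivial, P2_one_apply']
      calc ∑ j, x j * ∑ j', (∑ i, C (i, j) (i, j')) * x j'
          = ∑ j, ∑ j', ∑ i, x j * C (i, j) (i, j') * x j' := by
            refine Finset.sum_congr rfl fun j _ => ?_
            rw [Finset.mul_sum]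
            refine Finset.sum_congr rfl fun j' _ => ?_
            rw [Finset.sum_mul, Finset.mul_sum]
            exact Finset.sum_congr rfl fun i _ => by ring
        _ = ∑ i, ∑ j, ∑ j', x j * C (i, j) (i, j') * x j' :=
            sum_rot' _
    rw [hmain]
    have hi0 : (⟨0, hp1⟩ : Fin p1) ∈ (Finset.univ : Finset (Fin p1)) := Finset.mem_univ _
    refine Finset.sum_pos' (fun i _ => hC.posSemidef.dotProduct_mulVec_nonneg (z i)) ⟨⟨0, hp1⟩, hi0, ?_⟩
    refine hC.dotProduct_mulVec_pos (x := z ⟨0, hp1⟩) ?_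
    obtain ⟨j, hj⟩ := Function.ne_iff.mp hx
    intro hzero
    apply hj
    have := congrFun hzero (⟨0, hp1⟩, j)
    simpa [hz] using this

private lemma key_ineq' {p1 p2 : ℕ} {C : Matrix (Fin p1 × Fin p2) (Fin p1 × Fin p2) ℝ}
    (hC : C.PosDef)
    (hP1 : P1 C 1 = (p2 : ℝ) • (1 : Matrix (Fin p1) (Fin p1) ℝ))
    (hP2 : P2 C 1 = (p1 : ℝ) • (1 : Matrix (Fin p2) (Fin p2) ℝ))
    {T1 : Matrix (Fin p1) (Fin p1) ℝ} {T2 : Matrix (Fin p2) (Fin p2) ℝ}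
    (hT1 : T1.PosDef) (hT2 : T2.PosDef) :
    (p1 : ℝ) * p2 + p2 * Real.log T1.det + p1 * Real.log T2.det
      ≤ ((T1 ⊗ₖ T2) * C).trace := by
  set α := hT1.1.eigenvalues with hα
  set U := (hT1.1.eigenvectorUnitary : Matrix (Fin p1) (Fin p1) ℝ) with hUdef
  set β := hT2.1.eigenvalues with hβ
  set V := (hT2.1.eigenvectorUnitary : Matrix (Fin p2) (Fin p2) ℝ) with hVdef
  have hU : U ∈ Matrix.unitaryGroup (Fin p1) ℝ := SetLike.coe_mem _
  have hV : V ∈ Matrix.unitaryGroup (Fin p2) ℝ := SetLike.coe_mem _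
  have hαpos : ∀ a, 0 < α a := hT1.eigenvalues_pos
  have hβpos : ∀ b, 0 < β b := hT2.eigenvalues_pos
  have hT1d : T1 = U * Matrix.diagonal α * star U := by simpa using hT1.1.spectral_theorem
  have hT2d : T2 = V * Matrix.diagonal β * star V := by simpa using hT2.1.spectral_theorem
  set C' := (star U ⊗ₖ star V) * C * (U ⊗ₖ V) with hC'def
  have hW : star (U ⊗ₖ V) = star U ⊗ₖ star V := by
    ext x y; simp [Matrix.star_apply, Matrix.kroneckerMap_apply]
  have htr : ((T1 ⊗ₖ T2) * C).trace = ∑ a, ∑ b, α a * β b * C' (a, b) (a, b) := by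
    have h1 : T1 ⊗ₖ T2 = (U ⊗ₖ V)
        * Matrix.diagonal (fun x : Fin p1 × Fin p2 => α x.1 * β x.2)
        * (star U ⊗ₖ star V) := by
      rw [← Matrix.diagonal_kronecker_diagonal]
      conv_lhs => rw [hT1d, hT2d]
      rw [Matrix.mul_kronecker_mul, Matrix.mul_kronecker_mul]
    have h2 : ((T1 ⊗ₖ T2) * C).trace
        = (Matrix.diagonal (fun x : Fin p1 × Fin p2 => α x.1 * β x.2) * C').trace := by
      rw [h1, hC'def, ← hW, Matrix.mul_assoc, Matrix.mul_assoc, Matrix.trace_mul_comm,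
        ← Matrix.mul_assoc, ← Matrix.mul_assoc, ← Matrix.mul_assoc]
    rw [h2]
    simp [Matrix.trace, Matrix.diag, Matrix.diagonal_mul, Fintype.sum_prod_type]
  have hC'psd : C'.PosSemidef := by
    have h := hC.posSemidef.conjTranspose_mul_mul_same (U ⊗ₖ V)
    rw [hC'def, ← hW, Matrix.star_eq_conjTranspose]
    exact h
  have hw0 : ∀ a b, 0 ≤ C' (a, b) (a, b) := fun a b => posSemidef_diag' hC'psd _
  have hma : ∀ a, ∑ b, C' (a, b) (a, b) = (p2 : ℝ) := fun a => marg1' hP1 hU hV a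
  have hmb : ∀ b, ∑ a, C' (a, b) (a, b) = (p1 : ℝ) := fun b => marg2' hP2 hU hV b
  have hdet1 : T1.det = ∏ a, α a := det_eq_prod_eig' hT1.1
  have hdet2 : T2.det = ∏ b, β b := det_eq_prod_eig' hT2.1
  have hlog1 : Real.log T1.det = ∑ a, Real.log (α a) := by
    rw [hdet1, Real.log_prod (fun a _ => (hαpos a).ne')]
  have hlog2 : Real.log T2.det = ∑ b, Real.log (β b) := by
    rw [hdet2, Real.log_prod (fun b _ => (hβpos b).ne')]
  have hpt : ∀ a b, (1 + Real.log (α a) + Real.log (β b)) * C' (a, b) (a, b)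
      ≤ α a * β b * C' (a, b) (a, b) := by
    intro a b
    have h1 : Real.log (α a * β b) ≤ α a * β b - 1 :=
      Real.log_le_sub_one_of_pos (mul_pos (hαpos a) (hβpos b))
    rw [Real.log_mul (hαpos a).ne' (hβpos b).ne'] at h1
    have h2 : 1 + Real.log (α a) + Real.log (β b) ≤ α a * β b := by linarith
    exact mul_le_mul_of_nonneg_right h2 (hw0 a b)
  have hexp : ∑ a, ∑ b, (1 + Real.log (α a) + Real.log (β b)) * C' (a, b) (a, b)
      = (p1 : ℝ) * p2 + p2 * Real.log T1.det + p1 * Real.log T2.det := by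
    have hrow : ∀ a, ∑ b, (1 + Real.log (α a) + Real.log (β b)) * C' (a, b) (a, b)
        = (p2 : ℝ) + Real.log (α a) * p2 + ∑ b, Real.log (β b) * C' (a, b) (a, b) := by
      intro a
      have : ∀ b, (1 + Real.log (α a) + Real.log (β b)) * C' (a, b) (a, b)
          = C' (a, b) (a, b) + Real.log (α a) * C' (a, b) (a, b)
            + Real.log (β b) * C' (a, b) (a, b) := fun b => by ring
      rw [Finset.sum_congr rfl fun b _ => this b, Finset.sum_add_distrib,
        Finset.sum_add_distrib, ← Finset.mul_sum, hma a]
    rw [Finset.sum_congr rfl fun a _ => hrow a, Finset.sum_add_distrib,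
      Finset.sum_add_distrib]
    have e1 : ∑ _a : Fin p1, (p2 : ℝ) = (p1 : ℝ) * p2 := by
      simp [Finset.sum_const, Finset.card_univ]
    have e2 : ∑ a, Real.log (α a) * (p2 : ℝ) = (p2 : ℝ) * Real.log T1.det := by
      rw [← Finset.sum_mul, ← hlog1, mul_comm]
    have e3 : ∑ a, ∑ b, Real.log (β b) * C' (a, b) (a, b)
        = (p1 : ℝ) * Real.log T2.det := by
      rw [Finset.sum_comm]
      have : ∀ b, ∑ a, Real.log (β b) * C' (a, b) (a, b) = Real.log (β b) * p1 := by
        intro b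
        rw [← Finset.mul_sum, hmb b]
      rw [Finset.sum_congr rfl fun b _ => this b, ← Finset.sum_mul, ← hlog2, mul_comm]
    rw [e1, e2, e3]
  calc (p1 : ℝ) * p2 + p2 * Real.log T1.det + p1 * Real.log T2.det
      = ∑ a, ∑ b, (1 + Real.log (α a) + Real.log (β b)) * C' (a, b) (a, b) := hexp.symm
    _ ≤ ∑ a, ∑ b, α a * β b * C' (a, b) (a, b) :=
        Finset.sum_le_sum fun a _ => Finset.sum_le_sum fun b _ => hpt a b
    _ = ((T1 ⊗ₖ T2) * C).trace := htr.symm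

end Stmt9Aux

theorem stmt9 (p1 p2 : ℕ) (hp1 : 0 < p1) (hp2 : 0 < p2)
    (C : Matrix (Fin p1 × Fin p2) (Fin p1 × Fin p2) ℝ) (hC : C.PosDef) :
    (∀ K, SepPD K → dvg (1 : Matrix (Fin p1 × Fin p2) (Fin p1 × Fin p2) ℝ) C ≤ dvg K C) ↔
      (P1 C (1 : Matrix (Fin p2) (Fin p2) ℝ) = (p2 : ℝ) • (1 : Matrix (Fin p1) (Fin p1) ℝ) ∧
       P2 C (1 : Matrix (Fin p1) (Fin p1) ℝ) = (p1 : ℝ) • (1 : Matrix (Fin p2) (Fin p2) ℝ)) := by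
  have hp1R : (0 : ℝ) < p1 := by exact_mod_cast hp1
  have hp2R : (0 : ℝ) < p2 := by exact_mod_cast hp2
  constructor
  · intro H
    constructor
    · -- P1 C 1 = p2 • 1
      have hM := P1_posDef' hp2 hC
      have hMdetunit : IsUnit (P1 C 1).det := isUnit_iff_ne_zero.mpr hM.det_pos.ne'
      have hS1 : ((p2 : ℝ)⁻¹ • P1 C 1).PosDef := posDef_smul' hM (inv_pos.mpr hp2R)
      have hKey := H (sep ((p2 : ℝ)⁻¹ • P1 C 1) 1) ⟨_, _, hS1, Matrix.PosDef.one, rfl⟩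
      rw [dvg_one', dvg_sep' hS1 Matrix.PosDef.one, inv_one,
        trace_kron_one_left'] at hKey
      have hinv : ((p2 : ℝ)⁻¹ • P1 C 1)⁻¹ = (p2 : ℝ) • (P1 C 1)⁻¹ := by
        apply Matrix.inv_eq_right_inv
        rw [Matrix.smul_mul, Matrix.mul_smul, smul_smul, inv_mul_cancel₀ hp2R.ne',
          Matrix.mul_nonsing_inv _ hMdetunit, one_smul]
      rw [hinv, Matrix.smul_mul, Matrix.trace_smul, Matrix.nonsing_inv_mul _ hMdetunit,
        Matrix.trace_one, trace_eq_trace_P1' C, Matrix.det_smul,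
        Fintype.card_fin, Matrix.det_one, Real.log_one, mul_zero] at hKey
      refine min_lemma' hp2R hM ?_
      simp only [smul_eq_mul, Fintype.card_fin] at hKey
      linarith
    · -- P2 C 1 = p1 • 1
      have hN := P2_posDef' hp1 hC
      have hNdetunit : IsUnit (P2 C 1).det := isUnit_iff_ne_zero.mpr hN.det_pos.ne'
      have hS2 : ((p1 : ℝ)⁻¹ • P2 C 1).PosDef := posDef_smul' hN (inv_pos.mpr hp1R)
      have hKey := H (sep 1 ((p1 : ℝ)⁻¹ • P2 C 1)) ⟨_, _, Matrix.PosDef.one, hS2, rfl⟩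
      rw [dvg_one', dvg_sep' Matrix.PosDef.one hS2, inv_one,
        trace_kron_one_right'] at hKey
      have hinv : ((p1 : ℝ)⁻¹ • P2 C 1)⁻¹ = (p1 : ℝ) • (P2 C 1)⁻¹ := by
        apply Matrix.inv_eq_right_inv
        rw [Matrix.smul_mul, Matrix.mul_smul, smul_smul, inv_mul_cancel₀ hp1R.ne',
          Matrix.mul_nonsing_inv _ hNdetunit, one_smul]
      rw [hinv, Matrix.smul_mul, Matrix.trace_smul, Matrix.nonsing_inv_mul _ hNdetunit,
        Matrix.trace_one, trace_eq_trace_P2' C, Matrix.det_smul,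
        Fintype.card_fin, Matrix.det_one, Real.log_one, mul_zero] at hKey
      refine min_lemma' hp1R hN ?_
      simp only [smul_eq_mul, Fintype.card_fin] at hKey
      linarith
  · rintro ⟨hP1, hP2⟩ K ⟨S1, S2, hS1, hS2, rfl⟩
    rw [dvg_one', dvg_sep' hS1 hS2]
    have htrC : C.trace = (p1 : ℝ) * p2 := by
      rw [trace_eq_trace_P1' C, hP1, Matrix.trace_smul, Matrix.trace_one]
      simp [Fintype.card_fin, mul_comm]
    have hkey := key_ineq' hC hP1 hP2 hS1.inv hS2.inv
    have hd1 : Real.log (S1⁻¹).det = -Real.log S1.det := by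
      rw [Matrix.det_nonsing_inv, Ring.inverse_eq_inv', Real.log_inv]
    have hd2 : Real.log (S2⁻¹).det = -Real.log S2.det := by
      rw [Matrix.det_nonsing_inv, Ring.inverse_eq_inv', Real.log_inv]
    rw [hd1, hd2] at hkey
    rw [htrC]
    linarith
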